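/- For every ω > 0 and every f ∈ PW_ω(ℤ) one has the Bernstein-type inequality ∑_{n∈ℤ} |f(n+1) − f(n)|² ≤ ω·∑_{n∈ℤ} |f(n)|². -/

import Mathlib

open MeasureTheory Real Set

/-- `f : ℤ → ℂ` belongs to the Paley–Wiener space `PW_ω(ℤ)`: it is square-summable
and the `L²` function `F` on `[−π, π)` whose Fourier coefficients are `f` (the image
of `f` under the Fourier–Plancherel unitary) vanishes a.e. on the set where
`4·sin²(ξ/2) > ω`. -/
def IsPaleyWienerZ (ω : ℝ) (f : ℤ → ℂ) : Prop :=
  Summable (fun k : ℤ => ‖f k‖ ^ 2) ∧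
  ∃ F : ℝ → ℂ,
    MemLp F 2 (volume.restrict (Ico (-π) π)) ∧
    (∀ᵐ ξ ∂(volume.restrict (Ico (-π) π)), ω < 4 * Real.sin (ξ / 2) ^ 2 → F ξ = 0) ∧
    ∀ k : ℤ, f k = ((1 / (2 * π) : ℝ) : ℂ) *
      ∫ ξ in Ico (-π) π, F ξ * Complex.exp (-(Complex.I * (k : ℂ) * (ξ : ℂ)))


lemma aux_exp (x : ℝ) : Complex.exp (-(Complex.I * x)) = Complex.ofReal (Real.cos x) - Complex.ofReal (Real.sin x) * Complex.I := by
  rw [show -(Complex.I * (x:ℂ)) = ((-x : ℝ) : ℂ) * Complex.I by push_cast; ring,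
    Complex.exp_mul_I]
  push_cast
  simp [Real.cos_neg, Real.sin_neg]
  ring

lemma aux_norm (x : ℝ) : ‖Complex.exp (-(Complex.I * x)) - 1‖ ^ 2 = 4 * Real.sin (x/2) ^ 2 := by
  rw [aux_exp]
  rw [Complex.sq_norm, Complex.normSq_apply]
  simp only [Complex.sub_re, Complex.sub_im, Complex.ofReal_re, Complex.ofReal_im,
    Complex.mul_re, Complex.mul_im, Complex.I_re, Complex.I_im, Complex.one_re, Complex.one_im]
  have h1 := Real.sin_sq_add_cos_sq (x/2)
  have h2 : Real.cos x = 2 * Real.cos (x/2)^2 - 1 := by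
    have := Real.cos_two_mul (x/2)
    rw [show 2 * (x/2) = x by ring] at this
    linarith
  nlinarith [Real.sin_sq_add_cos_sq x]

lemma aux_fourier (k : ℤ) (x : ℝ) :
    @fourier (2*π) (-k) (x : AddCircle (2*π)) = Complex.exp (-(Complex.I * k * x)) := by
  rw [fourier_coe_apply]
  congr 1
  have hπ : (π:ℂ) ≠ 0 := Complex.ofReal_ne_zero.mpr Real.pi_ne_zero
  push_cast
  field_simp

lemma aux_fourier_norm (t : AddCircle (2*π)) : ‖@fourier (2*π) (-1) t - 1‖ ≤ 2 := by
  calc ‖@fourier (2*π) (-1) t - 1‖ ≤ ‖@fourier (2*π) (-1) t‖ + ‖(1:ℂ)‖ := norm_sub_le _ _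
  _ ≤ 2 := by
      rw [fourier_apply, Circle.norm_coe]
      norm_num

private theorem bernstein_aux (ω : ℝ) (hω : 0 < ω) (f : ℤ → ℂ)
    (hsum : Summable (fun k : ℤ => ‖f k‖ ^ 2))
    (F : ℝ → ℂ)
    (hFsm : StronglyMeasurable F)
    (hFmem : MemLp F 2 (volume.restrict (Ico (-π) π)))
    (hFvan : ∀ᵐ ξ ∂(volume.restrict (Ico (-π) π)), ω < 4 * Real.sin (ξ / 2) ^ 2 → F ξ = 0)
    (hFcoef : ∀ k : ℤ, f k = ((1 / (2 * π) : ℝ) : ℂ) *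
      ∫ ξ in Ico (-π) π, F ξ * Complex.exp (-(Complex.I * (k : ℂ) * (ξ : ℂ)))) :
    ∑' n : ℤ, ‖f (n + 1) - f n‖ ^ 2 ≤ ω * ∑' n : ℤ, ‖f n‖ ^ 2 := by
  haveI : Fact (0 < 2*π) := ⟨by positivity⟩
  set μ := volume.restrict (Ico (-π) π) with hμdef
  have hapT : -π + 2*π = π := by ring
  have hμν : volume.restrict (Ioc (-π) π) = μ := by
    exact Measure.restrict_congr_set (Ioo_ae_eq_Ioc.symm.trans Ioo_ae_eq_Ico)
  set G : AddCircle (2*π) → ℂ := AddCircle.liftIco (2*π) (-π) F with hGdef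
  have hGsm : StronglyMeasurable G := by
    have : G = ((Ico (-π) (-π+2*π)).restrict F) ∘ (AddCircle.measurableEquivIco (2*π) (-π)) := rfl
    rw [this]
    exact (hFsm.comp_measurable measurable_subtype_coe).comp_measurable
      (AddCircle.measurableEquivIco (2*π) (-π)).measurable
  have hmp := AddCircle.measurePreserving_mk (2*π) (-π)
  rw [hapT, hμν] at hmp
  -- G ∘ coe agrees with F on Ico
  have hGF : ∀ x ∈ Ico (-π) π, G (x : AddCircle (2*π)) = F x := by
    intro x hx
    exact AddCircle.liftIco_coe_apply (by rwa [hapT])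
  have hGFae : (fun x => G (x : AddCircle (2*π))) =ᵐ[μ] F := by
    filter_upwards [ae_restrict_mem measurableSet_Ico] with x hx using hGF x hx
  -- Memℒp statements
  have hGvol : MemLp G 2 (volume : Measure (AddCircle (2*π))) := by
    rw [← hmp.map_eq]
    exact (memLp_map_measure_iff hGsm.aestronglyMeasurable hmp.aemeasurable).mpr
      (hFmem.ae_eq hGFae.symm)
  have hhaar : (AddCircle.haarAddCircle : Measure (AddCircle (2*π)))
      = (ENNReal.ofReal (2*π))⁻¹ • (volume : Measure (AddCircle (2*π))) := by
    rw [AddCircle.volume_eq_smul_haarAddCircle, smul_smul,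
      ENNReal.inv_mul_cancel (ENNReal.ofReal_pos.mpr (by positivity)).ne' ENNReal.ofReal_ne_top,
      one_smul]
  have hGhaar : MemLp G 2 (AddCircle.haarAddCircle : Measure (AddCircle (2*π))) := by
    rw [hhaar]
    exact hGvol.smul_measure (by simp [Real.pi_pos])
  set H : AddCircle (2*π) → ℂ := fun t => (@fourier (2*π) (-1) t - 1) * G t with hHdef
  have hHsm : StronglyMeasurable H :=
    (((@fourier (2*π) (-1)).continuous.sub continuous_const).stronglyMeasurable).mul hGsm
  have hHhaar : MemLp H 2 (AddCircle.haarAddCircle : Measure (AddCircle (2*π))) := by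
    refine MemLp.of_le_mul (c := 2) hGhaar hHsm.aestronglyMeasurable (Filter.Eventually.of_forall fun t => ?_)
    rw [hHdef]
    calc ‖(@fourier (2*π) (-1) t - 1) * G t‖ = ‖@fourier (2*π) (-1) t - 1‖ * ‖G t‖ := norm_mul _ _
    _ ≤ 2 * ‖G t‖ := by
        exact mul_le_mul_of_nonneg_right (aux_fourier_norm t) (norm_nonneg _)
  -- fourierCoeff G k = f k
  have hcoefG : ∀ k : ℤ, fourierCoeff G k = f k := by
    intro k
    rw [fourierCoeff_eq_intervalIntegral G k (-π), hFcoef k,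
      intervalIntegral.integral_of_le (by linarith [Real.pi_pos] : (-π:ℝ) ≤ -π + 2*π)]
    rw [hapT, hμν]
    have heq : (∫ x, @fourier (2*π) (-k) (x : AddCircle (2*π)) • G ↑x ∂μ)
        = ∫ ξ, F ξ * Complex.exp (-(Complex.I * (k:ℂ) * (ξ:ℂ))) ∂μ := by
      refine integral_congr_ae ?_
      filter_upwards [ae_restrict_mem measurableSet_Ico] with x hx
      rw [hGF x hx, aux_fourier k x, smul_eq_mul, mul_comm]
    rw [heq, Complex.real_smul]
  -- integrability of fourier (-m) • G
  have hint : ∀ m : ℤ, Integrable (fun t => @fourier (2*π) (-m) t • G t)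
      (AddCircle.haarAddCircle : Measure (AddCircle (2*π))) := by
    intro m
    simp_rw [smul_eq_mul]
    refine Integrable.bdd_mul (hGhaar.integrable (by norm_num))
      (c := 1)
      (@fourier (2*π) (-m)).continuous.aestronglyMeasurable (Filter.Eventually.of_forall fun t => ?_)
    rw [fourier_apply, Circle.norm_coe]
  -- fourierCoeff H n = f (n+1) - f n
  have hcoefH : ∀ n : ℤ, fourierCoeff H n = f (n+1) - f n := by
    intro n
    have hpt : ∀ t : AddCircle (2*π), @fourier (2*π) (-n) t • H t
        = @fourier (2*π) (-(n+1)) t • G t - @fourier (2*π) (-n) t • G t := by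
      intro t
      have : @fourier (2*π) (-(n+1)) t = @fourier (2*π) (-n) t * @fourier (2*π) (-1) t := by
        rw [show -(n+1) = -n + (-1) by ring]
        exact fourier_add
      simp only [hHdef, smul_eq_mul, this]
      ring
    rw [fourierCoeff]
    simp_rw [hpt]
    rw [integral_sub (hint (n+1)) (hint n), ← fourierCoeff, ← fourierCoeff,
      hcoefG, hcoefG]
  -- Parseval
  have hGcoe : ⇑(hGhaar.toLp G) =ᵐ[(AddCircle.haarAddCircle : Measure (AddCircle (2*π)))] G :=
    hGhaar.coeFn_toLp
  have hHcoe : ⇑(hHhaar.toLp H) =ᵐ[(AddCircle.haarAddCircle : Measure (AddCircle (2*π)))] H :=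
    hHhaar.coeFn_toLp
  have hparsG : ∑' n : ℤ, ‖f n‖^2
      = ∫ t, ‖G t‖^2 ∂(AddCircle.haarAddCircle : Measure (AddCircle (2*π))) := by
    have h1 := tsum_sq_fourierCoeff (hGhaar.toLp G)
    have h2 : ∀ i : ℤ, fourierCoeff (⇑(hGhaar.toLp G)) i = f i := by
      intro i
      rw [← hcoefG i, fourierCoeff, fourierCoeff]
      exact integral_congr_ae (by filter_upwards [hGcoe] with t ht; rw [ht])
    have h3 : (∫ t, ‖(hGhaar.toLp G) t‖^2 ∂(AddCircle.haarAddCircle : Measure (AddCircle (2*π))))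
        = ∫ t, ‖G t‖^2 ∂(AddCircle.haarAddCircle : Measure (AddCircle (2*π))) :=
      integral_congr_ae (by filter_upwards [hGcoe] with t ht; rw [ht])
    rw [← h3, ← h1]
    exact tsum_congr fun i => by rw [h2]
  have hparsH : ∑' n : ℤ, ‖f (n+1) - f n‖^2
      = ∫ t, ‖H t‖^2 ∂(AddCircle.haarAddCircle : Measure (AddCircle (2*π))) := by
    have h1 := tsum_sq_fourierCoeff (hHhaar.toLp H)
    have h2 : ∀ i : ℤ, fourierCoeff (⇑(hHhaar.toLp H)) i = f (i+1) - f i := by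
      intro i
      rw [← hcoefH i, fourierCoeff, fourierCoeff]
      exact integral_congr_ae (by filter_upwards [hHcoe] with t ht; rw [ht])
    have h3 : (∫ t, ‖(hHhaar.toLp H) t‖^2 ∂(AddCircle.haarAddCircle : Measure (AddCircle (2*π))))
        = ∫ t, ‖H t‖^2 ∂(AddCircle.haarAddCircle : Measure (AddCircle (2*π))) :=
      integral_congr_ae (by filter_upwards [hHcoe] with t ht; rw [ht])
    rw [← h3, ← h1]
    exact tsum_congr fun i => by rw [h2]
  -- the pointwise a.e. inequality
  have hset : MeasurableSet {t : AddCircle (2*π) | ‖H t‖^2 ≤ ω * ‖G t‖^2} := by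
    apply measurableSet_le
    · exact hHsm.measurable.norm.pow_const 2
    · exact (hGsm.measurable.norm.pow_const 2).const_mul ω
  have haeV : ∀ᵐ t ∂(volume : Measure (AddCircle (2*π))), ‖H t‖^2 ≤ ω * ‖G t‖^2 := by
    rw [← hmp.map_eq, ae_map_iff hmp.aemeasurable hset]
    filter_upwards [hFvan, ae_restrict_mem measurableSet_Ico] with x hvan hx
    have hH : H (x : AddCircle (2*π)) = (Complex.exp (-(Complex.I * x)) - 1) * F x := by
      show (@fourier (2*π) (-1) ↑x - 1) * G ↑x = _
      rw [hGF x hx]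
      congr 2
      simpa using aux_fourier 1 x
    show ‖H (x : AddCircle (2*π))‖^2 ≤ ω * ‖G ↑x‖^2
    rw [hH, hGF x hx, norm_mul, mul_pow, aux_norm]
    by_cases hcase : ω < 4 * Real.sin (x/2)^2
    · rw [hvan hcase]
      simp
    · push_neg at hcase
      nlinarith [sq_nonneg ‖F x‖]
  have haeH : ∀ᵐ t ∂(AddCircle.haarAddCircle : Measure (AddCircle (2*π))),
      ‖H t‖^2 ≤ ω * ‖G t‖^2 := by
    rw [hhaar]
    exact Measure.ae_smul_measure haeV _
  rw [hparsH, hparsG, ← integral_const_mul]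
  exact integral_mono_ae hHhaar.norm.integrable_sq
    ((hGhaar.norm.integrable_sq).const_mul ω) haeH

/-- For every `ω > 0` and every `f ∈ PW_ω(ℤ)` one has the
Bernstein-type inequality `∑_{n∈ℤ} |f(n+1) − f(n)|² ≤ ω·∑_{n∈ℤ} |f(n)|²`. -/
theorem stmt_17 (ω : ℝ) (hω : 0 < ω) (f : ℤ → ℂ) (hf : IsPaleyWienerZ ω f) :
    ∑' n : ℤ, ‖f (n + 1) - f n‖ ^ 2 ≤ ω * ∑' n : ℤ, ‖f n‖ ^ 2 := by
  obtain ⟨hsum, F0, hF0mem, hF0van, hF0coef⟩ := hf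
  set F : ℝ → ℂ := hF0mem.1.mk F0 with hFdef
  have hFae : F0 =ᵐ[volume.restrict (Ico (-π) π)] F := hF0mem.1.ae_eq_mk
  refine bernstein_aux ω hω f hsum F hF0mem.1.stronglyMeasurable_mk (hF0mem.ae_eq hFae) ?_ ?_
  · filter_upwards [hF0van, hFae] with ξ h1 h2 h3
    rw [← h2]
    exact h1 h3
  · intro k
    rw [hF0coef k]
    congr 1
    refine integral_congr_ae ?_
    filter_upwards [hFae] with ξ h
    rw [h]
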